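/- Let k ≥ 3 be an integer and τ ∈ ℍ. Then ∑_{c ∈ ℤ∖{0}, d ∈ ℤ} 1/|cτ+d|^k < 4·ζ(k)/(Im τ)^k + 2π·ζ(k−1)/(Im τ)^{k−1}, where ζ denotes the Riemann zeta function. -/

import Mathlib

open Real


private lemma arctan_step {r p : ℝ} (hr : 0 < r) (hp : 0 ≤ p) :
    r / ((p + 1) ^ 2 + r ^ 2) ≤ arctan ((p + 1) / r) - arctan (p / r) := by
  set q : ℝ := p + 1 with hq
  set s : ℝ := r / (q ^ 2 + r ^ 2) with hs
  have hq0 : 0 < q := by linarith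
  have hderiv : ∀ x : ℝ, HasDerivAt (fun t : ℝ => arctan (t / r) - t * s)
      (r / (r ^ 2 + x ^ 2) - s) x := by
    intro x
    have h1 : HasDerivAt (fun t : ℝ => t / r) (1 / r) x := by
      simpa using (hasDerivAt_id x).div_const r
    have h2 := (Real.hasDerivAt_arctan (x / r)).comp x h1
    have h3 : HasDerivAt (fun t : ℝ => t * s) s x := hasDerivAt_mul_const s
    have heq : 1 / (1 + (x / r) ^ 2) * (1 / r) = r / (r ^ 2 + x ^ 2) := by
      have hx : 0 < r ^ 2 + x ^ 2 := by positivity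
      field_simp
    have h4 := h2.sub h3
    rw [show 1 / (1 + (x / r) ^ 2) * (1 / r) - s = r / (r ^ 2 + x ^ 2) - s by rw [heq]] at h4
    exact h4
  have hmono : MonotoneOn (fun t : ℝ => arctan (t / r) - t * s) (Set.Icc p q) := by
    apply monotoneOn_of_deriv_nonneg (convex_Icc p q)
    · exact (Continuous.continuousOn (by continuity))
    · intro x _
      exact (hderiv x).differentiableAt.differentiableWithinAt
    · intro x hx
      rw [interior_Icc] at hx
      rw [(hderiv x).deriv]
      have hx2 : x ^ 2 ≤ q ^ 2 := by nlinarith [hx.1, hx.2]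
      have : s ≤ r / (r ^ 2 + x ^ 2) := by
        rw [hs]
        apply div_le_div_of_nonneg_left hr.le (by positivity)
        nlinarith
      linarith
  have := hmono (Set.left_mem_Icc.2 (by linarith)) (Set.right_mem_Icc.2 (by linarith))
    (by linarith : p ≤ q)
  simp only at this
  have hqp : q - p = 1 := by rw [hq]; ring
  nlinarith [this]

private lemma sum_inv_sq_bound {r : ℝ} (hr : 0 < r) :
    ∑' n : ℕ, r / (((n : ℝ) + 1) ^ 2 + r ^ 2) ≤ π / 2 := by
  apply Real.tsum_le_of_sum_range_le (fun n => by positivity)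
  intro N
  have h1 : ∀ i ∈ Finset.range N, r / (((i : ℝ) + 1) ^ 2 + r ^ 2) ≤
      arctan (((i : ℝ) + 1) / r) - arctan ((i : ℝ) / r) := fun i _ =>
    arctan_step hr (by positivity)
  calc ∑ i ∈ Finset.range N, r / (((i : ℝ) + 1) ^ 2 + r ^ 2)
      ≤ ∑ i ∈ Finset.range N, (arctan (((i : ℝ) + 1) / r) - arctan ((i : ℝ) / r)) :=
        Finset.sum_le_sum h1
    _ = arctan ((N : ℝ) / r) - arctan ((0 : ℕ) / r) := by
        have := Finset.sum_range_sub (fun i : ℕ => arctan ((i : ℝ) / r)) N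
        simpa [Nat.cast_add, Nat.cast_one] using this
    _ ≤ π / 2 := by
        simp only [Nat.cast_zero, zero_div, arctan_zero, sub_zero]
        exact (arctan_lt_pi_div_two _).le

private lemma summable_aux {r : ℝ} (hr : 0 < r) :
    Summable (fun n : ℕ => 1 / (((n : ℝ) + 1) ^ 2 + r ^ 2)) := by
  have h2 : Summable (fun n : ℕ => 1 / ((n : ℝ) + 1) ^ 2) := by
    have := (summable_nat_add_iff (f := fun n : ℕ => 1 / (n : ℝ) ^ 2) 1).2
      (Real.summable_one_div_nat_pow.2 one_lt_two)
    simpa [Nat.cast_add, Nat.cast_one] using this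
  exact h2.of_nonneg_of_le (fun n => by positivity)
    (fun n => by
      apply one_div_le_one_div_of_le (by positivity)
      nlinarith [sq_nonneg r])

private lemma summable_G {k : ℕ} (hk : 3 ≤ k) {r : ℝ} (hr : 0 < r) :
    Summable (fun n : ℕ => 1 / Real.sqrt ((n : ℝ) ^ 2 + r ^ 2) ^ k) := by
  rw [← summable_nat_add_iff 1]
  have h2 : Summable (fun n : ℕ => 1 / ((n : ℝ) + 1) ^ 2) := by
    have := (summable_nat_add_iff (f := fun n : ℕ => 1 / (n : ℝ) ^ 2) 1).2
      (Real.summable_one_div_nat_pow.2 one_lt_two)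
    simpa [Nat.cast_add, Nat.cast_one] using this
  apply h2.of_nonneg_of_le (fun n => by positivity)
  intro n
  apply one_div_le_one_div_of_le (by positivity)
  have h1 : ((n : ℝ) + 1) ≤ Real.sqrt (((n : ℕ) + 1 : ℝ) ^ 2 + r ^ 2) := by
    rw [show ((n : ℕ) + 1 : ℝ) = (n : ℝ) + 1 by push_cast; ring]
    calc ((n : ℝ) + 1) = Real.sqrt (((n : ℝ) + 1) ^ 2) := by
          rw [Real.sqrt_sq (by positivity)]
      _ ≤ _ := Real.sqrt_le_sqrt (by nlinarith [sq_nonneg r])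
  calc ((n : ℝ) + 1) ^ 2 ≤ ((n : ℝ) + 1) ^ k := by
        apply pow_le_pow_right₀ (by linarith [Nat.cast_nonneg (α := ℝ) n]) (by omega)
    _ ≤ _ := by
        apply pow_le_pow_left₀ (by positivity)
        push_cast at h1 ⊢
        linarith

private lemma half_sum_bound {k : ℕ} (hk : 3 ≤ k) {r : ℝ} (hr : 0 < r) :
    (∑' n : ℕ, 1 / Real.sqrt ((n : ℝ) ^ 2 + r ^ 2) ^ k) +
      (∑' n : ℕ, 1 / Real.sqrt ((n : ℝ) ^ 2 + r ^ 2) ^ k) <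
    2 / r ^ k + π / r ^ (k - 1) := by
  set G : ℕ → ℝ := fun n => 1 / Real.sqrt ((n : ℝ) ^ 2 + r ^ 2) ^ k with hG
  have hGsum : Summable G := summable_G hk hr
  have hsplit : ∑' n, G n = G 0 + ∑' n, G (n + 1) := Summable.tsum_eq_zero_add hGsum
  have hG0 : G 0 = 1 / r ^ k := by
    simp only [hG, Nat.cast_zero]
    rw [show (0 : ℝ) ^ 2 + r ^ 2 = r ^ 2 by ring, Real.sqrt_sq hr.le]
  -- tail bound
  set H : ℕ → ℝ := fun n => 1 / (r ^ (k - 2) * (((n : ℝ) + 1) ^ 2 + r ^ 2)) with hH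
  have hHsum : Summable H := by
    have := (summable_aux hr).mul_left (1 / r ^ (k - 2))
    apply this.congr
    intro n
    rw [hH]
    field_simp
  have hlt : ∀ n : ℕ, G (n + 1) < H n := by
    intro n
    have hm1 : (1 : ℝ) ≤ (n : ℝ) + 1 := by linarith [Nat.cast_nonneg (α := ℝ) n]
    simp only [hG, hH, Nat.cast_add, Nat.cast_one]
    set m : ℝ := (n : ℝ) + 1 with hm
    set s : ℝ := Real.sqrt (m ^ 2 + r ^ 2) with hsdef
    have hs_pos : 0 < s := Real.sqrt_pos.2 (by nlinarith)
    have hrs : r < s := by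
      rw [hsdef]
      calc r = Real.sqrt (r ^ 2) := (Real.sqrt_sq hr.le).symm
        _ < _ := by
            apply Real.sqrt_lt_sqrt (by positivity)
            nlinarith
    have hs2 : s ^ 2 = m ^ 2 + r ^ 2 := Real.sq_sqrt (by positivity)
    have hkey : r ^ (k - 2) * (m ^ 2 + r ^ 2) < s ^ k := by
      have h1 : r ^ (k - 2) < s ^ (k - 2) := by
        apply pow_lt_pow_left₀ hrs hr.le
        omega
      calc r ^ (k - 2) * (m ^ 2 + r ^ 2) < s ^ (k - 2) * (m ^ 2 + r ^ 2) := by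
            apply mul_lt_mul_of_pos_right h1 (by positivity)
        _ = s ^ (k - 2) * s ^ 2 := by rw [hs2]
        _ = s ^ k := by rw [← pow_add]; congr 1; omega
    exact one_div_lt_one_div_of_lt (by positivity) hkey
  have htail : ∑' n, G (n + 1) < ∑' n, H n := by
    apply Summable.tsum_lt_tsum (i := 0) (fun n => (hlt n).le) (hlt 0) _ hHsum
    exact (summable_nat_add_iff 1).2 hGsum
  have hHle : ∑' n, H n ≤ (π / 2) / r ^ (k - 1) := by
    have heq : ∀ n : ℕ, H n = (1 / r ^ (k - 1)) * (r / (((n : ℝ) + 1) ^ 2 + r ^ 2)) := by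
      intro n
      rw [hH]
      have : r ^ (k - 1) = r ^ (k - 2) * r := by
        rw [← pow_succ]; congr 1; omega
      rw [this]
      field_simp
    calc ∑' n, H n = (1 / r ^ (k - 1)) * ∑' n : ℕ, r / (((n : ℝ) + 1) ^ 2 + r ^ 2) := by
          rw [← tsum_mul_left]; exact tsum_congr heq
      _ ≤ (1 / r ^ (k - 1)) * (π / 2) := by
          apply mul_le_mul_of_nonneg_left (sum_inv_sq_bound hr) (by positivity)
      _ = (π / 2) / r ^ (k - 1) := by ring
  have hpi : 0 < π := Real.pi_pos
  have h1 : ∑' n, G n < 1 / r ^ k + (π / 2) / r ^ (k - 1) := by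
    rw [hsplit, hG0]; linarith
  have h2 : (0:ℝ) < r ^ (k-1) := by positivity
  calc (∑' n, G n) + (∑' n, G n) < 2 * (1 / r ^ k + (π / 2) / r ^ (k - 1)) := by linarith
    _ = 2 / r ^ k + π / r ^ (k - 1) := by ring

private lemma inner_bound {k : ℕ} (hk : 3 ≤ k) {τ : ℂ} (hτ : 0 < τ.im) {c : ℤ} (hc : c ≠ 0) :
    Summable (fun d : ℤ => 1 / ‖(c : ℂ) * τ + (d : ℂ)‖ ^ k) ∧
    ∑' d : ℤ, 1 / ‖(c : ℂ) * τ + (d : ℂ)‖ ^ k <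
      2 / (|(c : ℝ)| * τ.im) ^ k + π / (|(c : ℝ)| * τ.im) ^ (k - 1) := by
  set y : ℝ := τ.im with hy
  set r : ℝ := |(c : ℝ)| * y with hrdef
  have hr : 0 < r := mul_pos (abs_pos.2 (by exact_mod_cast hc)) hτ
  set a : ℝ := (c : ℝ) * τ.re with ha
  set f : ℤ → ℝ := fun d => 1 / ‖(c : ℂ) * τ + (d : ℂ)‖ ^ k with hf
  have habs : ∀ d : ℤ, ‖(c : ℂ) * τ + (d : ℂ)‖ =
      Real.sqrt ((a + (d : ℝ)) ^ 2 + r ^ 2) := by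
    intro d
    rw [Complex.norm_def, Complex.normSq_apply]
    congr 1
    simp only [Complex.add_re, Complex.mul_re, Complex.intCast_re, Complex.intCast_im,
      Complex.add_im, Complex.mul_im, hrdef, ha, hy]
    rw [mul_pow, sq_abs]
    ring
  set G : ℕ → ℝ := fun n => 1 / Real.sqrt ((n : ℝ) ^ 2 + r ^ 2) ^ k with hG
  set g : ℤ → ℝ := fun j => @Int.rec (fun _ => ℝ) G G j with hg
  have hstep : ∀ (v : ℝ) (n : ℕ), (n : ℝ) ^ 2 ≤ v ^ 2 →
      1 / Real.sqrt (v ^ 2 + r ^ 2) ^ k ≤ G n := by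
    intro v n h
    have h1 : (0 : ℝ) < Real.sqrt ((n : ℝ) ^ 2 + r ^ 2) := Real.sqrt_pos.2 (by positivity)
    apply one_div_le_one_div_of_le (by positivity)
    apply pow_le_pow_left₀ (Real.sqrt_nonneg _)
    exact Real.sqrt_le_sqrt (by linarith)
  set d₀ : ℤ := -⌊a⌋ with hd₀
  have hfle : ∀ j : ℤ, f (j + d₀) ≤ g j := by
    intro j
    have hfr0 : 0 ≤ Int.fract a := Int.fract_nonneg a
    have hfr1 : Int.fract a < 1 := Int.fract_lt_one a
    have hfract : Int.fract a = a - ⌊a⌋ := rfl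
    cases j with
    | ofNat n =>
        show f ((n : ℤ) + d₀) ≤ G n
        rw [hf]
        simp only
        rw [habs]
        have hcast : a + (((n : ℤ) + d₀ : ℤ) : ℝ) = Int.fract a + n := by
          rw [hfract]; push_cast [hd₀]; ring
        rw [hcast]
        apply hstep
        have hn : (0 : ℝ) ≤ (n : ℝ) := Nat.cast_nonneg n
        nlinarith
    | negSucc n =>
        show f (Int.negSucc n + d₀) ≤ G n
        rw [hf]
        simp only
        rw [habs]
        have hcast : a + ((Int.negSucc n + d₀ : ℤ) : ℝ) = Int.fract a - ((n : ℝ) + 1) := by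
          rw [hfract]; push_cast [hd₀, Int.negSucc_eq]; ring
        rw [hcast]
        apply hstep
        have hn : (0 : ℝ) ≤ (n : ℝ) := Nat.cast_nonneg n
        nlinarith
  have hGsum : Summable G := summable_G hk hr
  have hgsum : HasSum g ((∑' n, G n) + (∑' n, G n)) := hGsum.hasSum.int_rec hGsum.hasSum
  have hfpos : ∀ j : ℤ, 0 ≤ f (j + d₀) := by
    intro j
    rw [hf]
    positivity
  have hshift : Summable (fun j : ℤ => f (j + d₀)) :=
    hgsum.summable.of_nonneg_of_le hfpos hfle
  have hfsum : Summable f := (Equiv.addRight d₀).summable_iff.1 hshift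
  refine ⟨hfsum, ?_⟩
  calc ∑' d : ℤ, f d = ∑' j : ℤ, f (j + d₀) := ((Equiv.addRight d₀).tsum_eq f).symm
    _ ≤ ∑' j : ℤ, g j := Summable.tsum_le_tsum hfle hshift hgsum.summable
    _ = (∑' n, G n) + (∑' n, G n) := hgsum.tsum_eq
    _ < 2 / r ^ k + π / r ^ (k - 1) := half_sum_bound hk hr

private lemma zeta_re_eq {k : ℕ} (hk : 2 ≤ k) :
    (riemannZeta (k : ℂ)).re = ∑' n : ℕ, 1 / ((n : ℝ) + 1) ^ k := by
  rw [zeta_nat_eq_tsum_of_gt_one (by omega : 1 < k)]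
  have hsumR : Summable (fun n : ℕ => 1 / (n : ℝ) ^ k) :=
    Real.summable_one_div_nat_pow.2 hk
  have hterm : ∀ n : ℕ, (1 / (n : ℂ) ^ k) = ((1 / (n : ℝ) ^ k : ℝ) : ℂ) := by
    intro n; push_cast; ring
  have hsumC : Summable (fun n : ℕ => 1 / (n : ℂ) ^ k) := by
    rw [funext hterm]
    exact Complex.summable_ofReal.2 hsumR
  rw [Complex.re_tsum hsumC]
  have h2 : ∀ n : ℕ, (1 / (n : ℂ) ^ k).re = 1 / (n : ℝ) ^ k := fun n => by
    rw [hterm n, Complex.ofReal_re]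
  rw [tsum_congr h2, Summable.tsum_eq_zero_add hsumR]
  rw [show (1 : ℝ) / (0 : ℕ) ^ k = 0 by
    simp [zero_pow (by omega : k ≠ 0)]]
  rw [zero_add]
  exact tsum_congr fun n => by push_cast; ring

private lemma summable_shift {m : ℕ} (hm : 2 ≤ m) :
    Summable (fun n : ℕ => 1 / ((n : ℝ) + 1) ^ m) := by
  have := (summable_nat_add_iff (f := fun n : ℕ => 1 / (n : ℝ) ^ m) 1).2
    (Real.summable_one_div_nat_pow.2 hm)
  simpa [Nat.cast_add, Nat.cast_one] using this

/-- for an integer `k ≥ 3` and `τ ∈ ℍ`,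
`∑_{c ∈ ℤ∖{0}, d ∈ ℤ} 1/|cτ+d|^k < 4·ζ(k)/(Im τ)^k + 2π·ζ(k−1)/(Im τ)^{k−1}`,
with `ζ` the Riemann zeta function (whose values at real arguments are real, so we take
real parts); the sum on the left converges. -/
theorem eisenstein_tail_bound (k : ℕ) (hk : 3 ≤ k) (τ : ℂ) (hτ : 0 < τ.im) :
    Summable (fun p : {p : ℤ × ℤ // p.1 ≠ 0} =>
      1 / ‖((p : ℤ × ℤ).1 : ℂ) * τ + ((p : ℤ × ℤ).2 : ℂ)‖ ^ k) ∧
    (∑' p : {p : ℤ × ℤ // p.1 ≠ 0},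
        1 / ‖((p : ℤ × ℤ).1 : ℂ) * τ + ((p : ℤ × ℤ).2 : ℂ)‖ ^ k) <
      4 * (riemannZeta (k : ℂ)).re / τ.im ^ k +
        2 * Real.pi * (riemannZeta ((k - 1 : ℕ) : ℂ)).re / τ.im ^ (k - 1) := by
  have hy : 0 < τ.im := hτ
  set y : ℝ := τ.im with hydef
  -- the outer reindexing map
  set cm : ℤ → ℤ := fun j => if 0 ≤ j then j + 1 else j with hcm
  have hcm_ne : ∀ j, cm j ≠ 0 := by
    intro j
    simp only [hcm]
    split <;> omega
  let E : ℤ × ℤ ≃ {p : ℤ × ℤ // p.1 ≠ 0} :=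
    { toFun := fun q => ⟨(cm q.1, q.2), hcm_ne q.1⟩
      invFun := fun p =>
        ((if 0 < (p : ℤ × ℤ).1 then (p : ℤ × ℤ).1 - 1 else (p : ℤ × ℤ).1), (p : ℤ × ℤ).2)
      left_inv := by
        rintro ⟨j, d⟩
        simp only [hcm]
        split_ifs with h1 h2 h3 <;> simp_all <;> omega
      right_inv := by
        rintro ⟨⟨c, d⟩, h⟩
        simp only [hcm]
        apply Subtype.ext
        simp only
        split_ifs with h1 h2 h3 <;> simp_all <;> omega }
  set LHSfun : {p : ℤ × ℤ // p.1 ≠ 0} → ℝ := fun p =>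
    1 / ‖((p : ℤ × ℤ).1 : ℂ) * τ + ((p : ℤ × ℤ).2 : ℂ)‖ ^ k with hLHSfun
  set F : ℤ × ℤ → ℝ := fun q => 1 / ‖(cm q.1 : ℂ) * τ + (q.2 : ℂ)‖ ^ k with hF
  have hcomp : ∀ q : ℤ × ℤ, LHSfun (E q) = F q := fun q => rfl
  -- inner summability and bounds
  set b : ℕ → ℝ := fun n =>
    2 / (((n : ℝ) + 1) * y) ^ k + π / (((n : ℝ) + 1) * y) ^ (k - 1) with hb
  set Bv : ℤ → ℝ := fun j => @Int.rec (fun _ => ℝ) b b j with hBv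
  have habs_cm : ∀ j : ℤ, |((cm j : ℤ) : ℝ)| =
      (((@Int.rec (fun _ => ℕ) (fun n => n) (fun n => n) j : ℕ) : ℝ) + 1) := by
    intro j
    cases j with
    | ofNat n =>
        have h0 : (0 : ℤ) ≤ (n : ℤ) := Int.ofNat_nonneg n
        simp only [hcm, Int.ofNat_eq_coe, if_pos h0]
        push_cast
        rw [abs_of_nonneg (by positivity)]
    | negSucc n =>
        have h0 : ¬ (0 : ℤ) ≤ Int.negSucc n := not_le.2 (Int.negSucc_lt_zero n)
        simp only [hcm, if_neg h0]
        show |((Int.negSucc n : ℤ) : ℝ)| = (n : ℝ) + 1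
        rw [Int.cast_negSucc]
        push_cast
        rw [abs_neg, abs_of_nonneg (by positivity)]
  have hinner : ∀ j : ℤ, Summable (fun d : ℤ => F (j, d)) := fun j =>
    (inner_bound hk hτ (hcm_ne j)).1
  have hTlt : ∀ j : ℤ, (∑' d : ℤ, F (j, d)) < Bv j := by
    intro j
    have h := (inner_bound hk hτ (hcm_ne j)).2
    rw [habs_cm j] at h
    cases j with
    | ofNat n => exact h
    | negSucc n => exact h
  have hTle : ∀ j : ℤ, (∑' d : ℤ, F (j, d)) ≤ Bv j := fun j => (hTlt j).le
  have h1 : Summable (fun n : ℕ => (2 / y ^ k) * (1 / ((n : ℝ) + 1) ^ k)) :=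
    (summable_shift (by omega)).mul_left _
  have h2 : Summable (fun n : ℕ => (π / y ^ (k - 1)) * (1 / ((n : ℝ) + 1) ^ (k - 1))) :=
    (summable_shift (by omega)).mul_left _
  have hbeq : ∀ n : ℕ, (2 / y ^ k) * (1 / ((n : ℝ) + 1) ^ k) +
      (π / y ^ (k - 1)) * (1 / ((n : ℝ) + 1) ^ (k - 1)) = b n := by
    intro n
    have hn1 : (0 : ℝ) < (n : ℝ) + 1 := by positivity
    simp only [hb]
    rw [mul_pow, mul_pow]
    field_simp
  have hbsum : Summable b := (h1.add h2).congr hbeq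
  have hBvsum : Summable Bv := hbsum.int_rec hbsum
  have hFpos : 0 ≤ F := by
    intro q
    simp only [hF]
    positivity
  have hTsum : Summable (fun j : ℤ => ∑' d : ℤ, F (j, d)) :=
    hBvsum.of_nonneg_of_le (fun j => tsum_nonneg (fun d => hFpos _)) hTle
  have hFsum : Summable F := (summable_prod_of_nonneg hFpos).2 ⟨hinner, hTsum⟩
  have hLsum : Summable LHSfun := E.summable_iff.1 (by exact hFsum)
  refine ⟨hLsum, ?_⟩
  have hEq1 : ∑' p, LHSfun p = ∑' q, F q := by
    rw [← E.tsum_eq LHSfun]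
    exact tsum_congr hcomp
  have hEq2 : ∑' q : ℤ × ℤ, F q = ∑' j : ℤ, ∑' d : ℤ, F (j, d) := Summable.tsum_prod' hFsum hinner
  have hlt2 : (∑' j : ℤ, ∑' d : ℤ, F (j, d)) < ∑' j : ℤ, Bv j :=
    Summable.tsum_lt_tsum hTle (hTlt 0) hTsum hBvsum
  have hBvtsum : ∑' j : ℤ, Bv j = (∑' n, b n) + (∑' n, b n) := tsum_int_rec hbsum hbsum
  have hbval : ∑' n, b n = (2 / y ^ k) * (∑' n : ℕ, 1 / ((n : ℝ) + 1) ^ k) +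
      (π / y ^ (k - 1)) * (∑' n : ℕ, 1 / ((n : ℝ) + 1) ^ (k - 1)) := by
    rw [← tsum_mul_left, ← tsum_mul_left, ← Summable.tsum_add h1 h2]
    exact (tsum_congr hbeq).symm
  calc ∑' p, LHSfun p = ∑' j : ℤ, ∑' d : ℤ, F (j, d) := by rw [hEq1, hEq2]
    _ < ∑' j : ℤ, Bv j := hlt2
    _ = 4 * (riemannZeta (k : ℂ)).re / y ^ k +
        2 * π * (riemannZeta ((k - 1 : ℕ) : ℂ)).re / y ^ (k - 1) := by
      rw [hBvtsum, hbval, zeta_re_eq (by omega : 2 ≤ k), zeta_re_eq (by omega : 2 ≤ k - 1)]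
      ring
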